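/- arXiv:1604.08040 — 6 statements merged into one kernel-verified Lean document; each statement's English description precedes it below -/
import Mathlib

section
/- Let S be a set of flat clauses and let S' be the set of ground clauses obtained from the set S* of all DC-instances of clauses of S by deleting every clause containing a literal d = d (d a domain constant), deleting from the remaining clauses every literal d_1 = d_2 with d_1, d_2 distinct domain constants, and adding all functionality definitions and all totality definitions. Then (i) every literal occurring in S' is a principal literal, and (ii) S is n-satisfiable if and only if S', viewed as a propositional clause set whose propositional variables are the principal atoms, is propositionally satisfiable. -/
namespace FMF

/-- A (single-sorted) first-order language: function symbols and predicate
symbols, each with an arity. -/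
structure Lang : Type 1 where
  Func : Type
  funAr : Func → ℕ
  Pred : Type
  predAr : Pred → ℕ

/-- First-order terms of a language `L` with variables drawn from `V`. -/
inductive Term (L : Lang) (V : Type) : Type where
  | var : V → Term L V
  | app : (f : L.Func) → (Fin (L.funAr f) → Term L V) → Term L V

/-- A structure (interpretation) for the language `L` with universe `M`. -/
structure Struc (L : Lang) (M : Type) : Type where
  funM : (f : L.Func) → (Fin (L.funAr f) → M) → M
  predM : (p : L.Pred) → (Fin (L.predAr p) → M) → Prop

/-- Evaluation of a term in a structure under a variable assignment. -/
def Term.eval {L : Lang} {V M : Type} (S : Struc L M) (v : V → M) : Term L V → M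
  | .var x => v x
  | .app f ts => S.funM f (fun i => (ts i).eval S v)

/-- Literals: (possibly negated) predicate atoms and (possibly negated) equalities. -/
inductive Literal (L : Lang) (V : Type) : Type where
  | pos (p : L.Pred) (ts : Fin (L.predAr p) → Term L V)
  | neg (p : L.Pred) (ts : Fin (L.predAr p) → Term L V)
  | eq (t s : Term L V)
  | ne (t s : Term L V)

/-- Truth of a literal in a structure under a variable assignment. -/
def Literal.holdsUnder {L : Lang} {V M : Type} (S : Struc L M) (v : V → M) :
    Literal L V → Prop
  | .pos p ts => S.predM p (fun i => (ts i).eval S v)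
  | .neg p ts => ¬ S.predM p (fun i => (ts i).eval S v)
  | .eq t s => t.eval S v = s.eval S v
  | .ne t s => t.eval S v ≠ s.eval S v

/-- A clause is a disjunction of literals (represented as a list). -/
abbrev Clause (L : Lang) (V : Type) := List (Literal L V)

/-- Truth of a clause (as a disjunction) under a single variable assignment. -/
def Clause.trueUnder {L : Lang} {V M : Type} (S : Struc L M) (v : V → M)
    (C : Clause L V) : Prop :=
  ∃ l ∈ C, l.holdsUnder S v

/-- Truth of a clause in a structure: all variables are implicitly universally
quantified. -/
def Clause.holds {L : Lang} {V M : Type} (S : Struc L M) (C : Clause L V) : Prop :=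
  ∀ v : V → M, C.trueUnder S v

/-- The language `L' = L ∪ DC` obtained from `L` by adding `n` fresh domain
constants `c_1, …, c_n`. -/
def Lang.withConsts (L : Lang) (n : ℕ) : Lang where
  Func := L.Func ⊕ Fin n
  funAr := Sum.elim L.funAr (fun _ => 0)
  Pred := L.Pred
  predAr := L.predAr

/-- The ground term consisting of the `i`-th domain constant. -/
def dcTerm {L : Lang} {n : ℕ} {V : Type} (i : Fin n) : Term (L.withConsts n) V :=
  .app (Sum.inr i) (fun j => j.elim0)

/-- A `DC`-interpretation: a structure for `L ∪ DC` whose universe is the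
`n`-element set `DC` (identified with `Fin n`) interpreting every domain
constant as itself. -/
structure DCInterp (L : Lang) (n : ℕ) : Type where
  S : Struc (L.withConsts n) (Fin n)
  dc_self : ∀ (i : Fin n) (e : Fin 0 → Fin n), S.funM (Sum.inr i) e = i

/-- The reduct of an `L ∪ DC`-structure to the language `L`. -/
def Struc.reduct {L : Lang} {n : ℕ} {M : Type} (S : Struc (L.withConsts n) M) :
    Struc L M where
  funM f := S.funM (Sum.inl f)
  predM p := S.predM p

/-- Lift an `L`-term to an `L ∪ DC`-term. -/
def Term.lift {L : Lang} {n : ℕ} {V : Type} : Term L V → Term (L.withConsts n) V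
  | .var x => .var x
  | .app f ts => .app (Sum.inl f) (fun i => (ts i).lift)

/-- Substituting domain constants for all variables of a term. -/
def Term.substDC {L : Lang} {n : ℕ} {V : Type} (σ : V → Fin n) :
    Term (L.withConsts n) V → Term (L.withConsts n) Empty
  | .var x => dcTerm (σ x)
  | .app f ts => .app f (fun i => (ts i).substDC σ)

/-- Lift an `L`-literal to an `L ∪ DC`-literal. -/
def Literal.lift {L : Lang} {n : ℕ} {V : Type} : Literal L V → Literal (L.withConsts n) V
  | .pos p ts => .pos p (fun i => (ts i).lift)
  | .neg p ts => .neg p (fun i => (ts i).lift)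
  | .eq t s => .eq t.lift s.lift
  | .ne t s => .ne t.lift s.lift

/-- Substituting domain constants for all variables of a literal. -/
def Literal.substDC {L : Lang} {n : ℕ} {V : Type} (σ : V → Fin n) :
    Literal (L.withConsts n) V → Literal (L.withConsts n) Empty
  | .pos p ts => .pos p (fun i => (ts i).substDC σ)
  | .neg p ts => .neg p (fun i => (ts i).substDC σ)
  | .eq t s => .eq (t.substDC σ) (s.substDC σ)
  | .ne t s => .ne (t.substDC σ) (s.substDC σ)

/-- Substituting domain constants for all variables of an `L ∪ DC`-clause,
yielding a ground clause. -/
def Clause.substDC {L : Lang} {n : ℕ} {V : Type} (σ : V → Fin n)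
    (C : Clause (L.withConsts n) V) : Clause (L.withConsts n) Empty :=
  C.map (Literal.substDC σ)

/-- The `DC`-instance of an `L`-clause determined by the substitution `σ`:
the ground `L ∪ DC`-clause obtained by replacing every variable `x` by the
domain constant `σ x`. -/
def Clause.toDC {L : Lang} {n : ℕ} {V : Type} (σ : V → Fin n) (C : Clause L V) :
    Clause (L.withConsts n) Empty :=
  Clause.substDC σ (C.map Literal.lift)

/-- A principal term `f(d_1,…,d_m)`: a function symbol of `L` applied to
domain constants. -/
def pTerm {L : Lang} {n : ℕ} (f : L.Func) (d : Fin (L.funAr f) → Fin n) :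
    Term (L.withConsts n) Empty :=
  .app (Sum.inl f) (fun i => dcTerm (d i))

/-- The functionality definition `p ≠ d₁ ∨ p ≠ d₂` for the principal term
`p = f(d)` and domain constants `d₁, d₂`. -/
def funcClause {L : Lang} {n : ℕ} (f : L.Func) (d : Fin (L.funAr f) → Fin n)
    (d₁ d₂ : Fin n) : Clause (L.withConsts n) Empty :=
  [.ne (pTerm f d) (dcTerm d₁), .ne (pTerm f d) (dcTerm d₂)]

/-- The totality definition `p = c₁ ∨ … ∨ p = c_n` for the principal term
`p = f(d)`. -/
def totClause {L : Lang} {n : ℕ} (f : L.Func) (d : Fin (L.funAr f) → Fin n) :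
    Clause (L.withConsts n) Empty :=
  List.ofFn (fun j : Fin n => Literal.eq (pTerm f d) (dcTerm j))

/-- A principal atom: either `p(d_1,…,d_m)` for a predicate symbol `p` of `L`
and domain constants `d_i`, or `t = d` for a principal term `t` and a domain
constant `d`. -/
def IsPrincipalAtom {L : Lang} {n : ℕ} (A : Literal (L.withConsts n) Empty) : Prop :=
  (∃ (p : L.Pred) (d : Fin (L.predAr p) → Fin n),
      A = Literal.pos (L := L.withConsts n) p (fun i => dcTerm (d i))) ∨
  (∃ (f : L.Func) (d : Fin (L.funAr f) → Fin n) (e : Fin n),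
      A = Literal.eq (pTerm f d) (dcTerm e))

/-- A principal literal: a principal atom or its negation. -/
def IsPrincipalLit {L : Lang} {n : ℕ} (l : Literal (L.withConsts n) Empty) : Prop :=
  (∃ (p : L.Pred) (d : Fin (L.predAr p) → Fin n),
      l = Literal.pos (L := L.withConsts n) p (fun i => dcTerm (d i))) ∨
  (∃ (p : L.Pred) (d : Fin (L.predAr p) → Fin n),
      l = Literal.neg (L := L.withConsts n) p (fun i => dcTerm (d i))) ∨
  (∃ (f : L.Func) (d : Fin (L.funAr f) → Fin n) (e : Fin n),
      l = Literal.eq (pTerm f d) (dcTerm e)) ∨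
  (∃ (f : L.Func) (d : Fin (L.funAr f) → Fin n) (e : Fin n),
      l = Literal.ne (pTerm f d) (dcTerm e))


/-- A family of terms all of which are variables. -/
def IsVarArgs {L : Lang} {V : Type} {m : ℕ} (ts : Fin m → Term L V) : Prop :=
  ∀ i, ∃ x : V, ts i = Term.var x

/-- Flat literals. -/
def IsFlatLit {L : Lang} {V : Type} : Literal L V → Prop
  | .pos _ ts => IsVarArgs ts
  | .neg _ ts => IsVarArgs ts
  | .eq t s =>
      (∃ x y : V, t = Term.var x ∧ s = Term.var y) ∨
      (∃ (f : L.Func) (ts' : Fin (L.funAr f) → Term L V) (y : V),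
        t = Term.app f ts' ∧ IsVarArgs ts' ∧ s = Term.var y)
  | .ne t s =>
      ∃ (f : L.Func) (ts' : Fin (L.funAr f) → Term L V) (y : V),
        t = Term.app f ts' ∧ IsVarArgs ts' ∧ s = Term.var y

/-- A clause containing a tautological literal `d = d` for a domain constant `d`. -/
def containsTaut {L : Lang} {n : ℕ} (D : Clause (L.withConsts n) Empty) : Prop :=
  ∃ d : Fin n, Literal.eq (dcTerm d) (dcTerm d) ∈ D

/-- A literal which is an equality between two distinct domain constants. -/
def isDCEqLit {L : Lang} {n : ℕ} (l : Literal (L.withConsts n) Empty) : Prop :=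
  ∃ d₁ d₂ : Fin n, d₁ ≠ d₂ ∧ l = Literal.eq (dcTerm d₁) (dcTerm d₂)

open Classical in
/-- The clause obtained by deleting every literal `d₁ = d₂` with `d₁, d₂`
distinct domain constants. -/
noncomputable def pruneClause {L : Lang} {n : ℕ} (D : Clause (L.withConsts n) Empty) :
    Clause (L.withConsts n) Empty :=
  D.filter (fun l => decide (¬ isDCEqLit l))

/-- The clause set `S'`: the `DC`-instances of clauses of `S` with tautological
clauses deleted and equalities between distinct domain constants removed,
together with all functionality and totality definitions. -/
def Sprime (L : Lang) (V : Type) (n : ℕ) (SS : Set (Clause L V)) :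
    Set (Clause (L.withConsts n) Empty) :=
  {D' | ∃ C ∈ SS, ∃ σ : V → Fin n,
      ¬ containsTaut (Clause.toDC σ C) ∧ D' = pruneClause (Clause.toDC σ C)} ∪
  {D' | ∃ (f : L.Func) (d : Fin (L.funAr f) → Fin n) (d₁ d₂ : Fin n),
      d₁ ≠ d₂ ∧ D' = funcClause f d d₁ d₂} ∪
  {D' | ∃ (f : L.Func) (d : Fin (L.funAr f) → Fin n), D' = totClause f d}

/-- Propositional truth of a principal literal under a propositional valuation
of the principal atoms: `vP` assigns a truth value to every atom
`p(d_1,…,d_m)`, and `vE` assigns a truth value to every atom `f(d_1,…,d_m) = e`. -/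
def LitPropTrue {L : Lang} {n : ℕ}
    (vP : (p : L.Pred) → (Fin (L.predAr p) → Fin n) → Prop)
    (vE : (f : L.Func) → (Fin (L.funAr f) → Fin n) → Fin n → Prop) :
    Literal (L.withConsts n) Empty → Prop
  | .pos p ts => ∃ d : Fin (L.predAr p) → Fin n,
      ts = (fun i => dcTerm (d i)) ∧ vP p d
  | .neg p ts => ∃ d : Fin (L.predAr p) → Fin n,
      ts = (fun i => dcTerm (d i)) ∧ ¬ vP p d
  | .eq t s => ∃ (f : L.Func) (d : Fin (L.funAr f) → Fin n) (e : Fin n),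
      t = pTerm f d ∧ s = dcTerm e ∧ vE f d e
  | .ne t s => ∃ (f : L.Func) (d : Fin (L.funAr f) → Fin n) (e : Fin n),
      t = pTerm f d ∧ s = dcTerm e ∧ ¬ vE f d e

section Helpers
variable {L : Lang} {n : ℕ} {V : Type}

lemma dcTerm_inj {i j : Fin n} (h : (dcTerm (L := L) (V := Empty) i) = dcTerm j) : i = j := by
  injection h with h1 h2
  exact Sum.inr.inj h1

lemma pTerm_ne_dcTerm {f : L.Func} {d : Fin (L.funAr f) → Fin n} {e : Fin n} :
    pTerm f d ≠ dcTerm e := by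
  intro h
  injection h with h1 h2
  exact Sum.inl_ne_inr h1

lemma pTerm_inj {f g : L.Func} {d : Fin (L.funAr f) → Fin n} {e : Fin (L.funAr g) → Fin n}
    (h : pTerm (n := n) f d = pTerm g e)
    (P : (f : L.Func) → (Fin (L.funAr f) → Fin n) → Prop) (hp : P g e) : P f d := by
  injection h with h1 h2
  obtain rfl : f = g := Sum.inl.inj h1
  have h3 := eq_of_heq h2
  have : d = e := funext fun i => dcTerm_inj (congrFun h3 i)
  rw [this]; exact hp

lemma mem_prune_iff {D : Clause (L.withConsts n) Empty} {l : Literal (L.withConsts n) Empty} :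
    l ∈ pruneClause D ↔ l ∈ D ∧ ¬ isDCEqLit l := by
  simp [pruneClause, List.mem_filter]

lemma mem_toDC_iff {C : Clause L V} {σ : V → Fin n} {l' : Literal (L.withConsts n) Empty} :
    l' ∈ Clause.toDC σ C ↔ ∃ l ∈ C, Literal.substDC σ (Literal.lift l) = l' := by
  simp [Clause.toDC, Clause.substDC, List.mem_map]

end Helpers

section Main
variable {L : Lang} {n : ℕ} {V : Type}

lemma principal_of_mem_prune {C : Clause L V} (hfl : ∀ l ∈ C, IsFlatLit l)
    {σ : V → Fin n} (hnt : ¬ containsTaut (Clause.toDC σ C))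
    {l : Literal (L.withConsts n) Empty} (hl : l ∈ pruneClause (Clause.toDC σ C)) :
    IsPrincipalLit l := by
  rw [mem_prune_iff] at hl
  obtain ⟨hmem, hnd⟩ := hl
  obtain ⟨l₀, hl₀, rfl⟩ := mem_toDC_iff.mp hmem
  have hf := hfl l₀ hl₀
  cases l₀ with
  | pos p ts =>
      choose x hx using hf
      left
      refine ⟨p, fun i => σ (x i), ?_⟩
      show Literal.pos (L := L.withConsts n) p (fun i => ((ts i).lift).substDC σ) = _
      congr 1
      funext i; rw [hx i]; rfl
  | neg p ts =>
      choose x hx using hf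
      right; left
      refine ⟨p, fun i => σ (x i), ?_⟩
      show Literal.neg (L := L.withConsts n) p (fun i => ((ts i).lift).substDC σ) = _
      congr 1
      funext i; rw [hx i]; rfl
  | eq t s =>
      rcases hf with ⟨a, b, rfl, rfl⟩ | ⟨f, ts', y, rfl, hv, rfl⟩
      · by_cases hab : σ a = σ b
        · exact absurd ⟨σ a, by rw [mem_toDC_iff]; exact ⟨_, hl₀, by show Literal.eq (dcTerm (σ a)) (dcTerm (σ b)) = _; rw [hab]⟩⟩ hnt
        · exact absurd ⟨σ a, σ b, hab, rfl⟩ hnd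
      · choose x hx using hv
        right; right; left
        refine ⟨f, fun i => σ (x i), σ y, ?_⟩
        show Literal.eq (Term.app (Sum.inl f) (fun i => ((ts' i).lift).substDC σ)) (dcTerm (σ y)) = _
        congr 1
        show _ = pTerm f _
        unfold pTerm
        congr 1
        funext i; rw [hx i]; rfl
  | ne t s =>
      obtain ⟨f, ts', y, rfl, hv, rfl⟩ := hf
      choose x hx using hv
      right; right; right
      refine ⟨f, fun i => σ (x i), σ y, ?_⟩
      show Literal.ne (Term.app (Sum.inl f) (fun i => ((ts' i).lift).substDC σ)) (dcTerm (σ y)) = _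
      congr 1
      show _ = pTerm f _
      unfold pTerm
      congr 1
      funext i; rw [hx i]; rfl

lemma part_one (SS : Set (Clause L V)) (hflat : ∀ C ∈ SS, ∀ l ∈ C, IsFlatLit l) :
    ∀ D ∈ Sprime L V n SS, ∀ l ∈ D, IsPrincipalLit l := by
  rintro D hD l hl
  rcases hD with (⟨C, hC, σ, hnt, rfl⟩ | ⟨f, d, d₁, d₂, hne, rfl⟩) | ⟨f, d, rfl⟩
  · exact principal_of_mem_prune (hflat C hC) hnt hl
  · simp only [funcClause, List.mem_cons, List.mem_singleton, List.not_mem_nil, or_false] at hl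
    rcases hl with rfl | rfl
    · exact Or.inr (Or.inr (Or.inr ⟨f, d, d₁, rfl⟩))
    · exact Or.inr (Or.inr (Or.inr ⟨f, d, d₂, rfl⟩))
  · rw [totClause, List.mem_ofFn] at hl
    obtain ⟨j, rfl⟩ := hl
    exact Or.inr (Or.inr (Or.inl ⟨f, d, j, rfl⟩))


lemma substDC_lift_app {σ : V → Fin n} {f : L.Func} {ts' : Fin (L.funAr f) → Term L V}
    {x : Fin (L.funAr f) → V} (hx : ∀ i, ts' i = Term.var (x i)) :
    ((Term.app f ts').lift).substDC σ = pTerm f (fun i => σ (x i)) := by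
  show Term.app (L := L.withConsts n) (Sum.inl f) (fun i => ((ts' i).lift).substDC σ) = _
  unfold pTerm
  congr 1
  funext i; rw [hx i]; rfl

lemma forward (SS : Set (Clause L V)) (hn : 1 ≤ n)
    (hflat : ∀ C ∈ SS, ∀ l ∈ C, IsFlatLit l)
    (hex : ∃ (M : Type) (S : Struc L M), Nat.card M = n ∧ ∀ C ∈ SS, Clause.holds S C) :
    ∃ (vP : (p : L.Pred) → (Fin (L.predAr p) → Fin n) → Prop)
      (vE : (f : L.Func) → (Fin (L.funAr f) → Fin n) → Fin n → Prop),
      ∀ D ∈ Sprime L V n SS, ∃ l ∈ D, LitPropTrue vP vE l := by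
  obtain ⟨M, S, hcard, hsat⟩ := hex
  have : Finite M := Nat.finite_of_card_ne_zero (by omega)
  obtain ⟨e⟩ : Nonempty (M ≃ Fin n) := ⟨Finite.equivFinOfCardEq hcard⟩
  refine ⟨fun p d => S.predM p (fun i => e.symm (d i)),
          fun f d k => e (S.funM f (fun i => e.symm (d i))) = k, ?_⟩
  rintro D ((⟨C, hC, σ, hnt, rfl⟩ | ⟨f, d, d₁, d₂, hne, rfl⟩) | ⟨f, d, rfl⟩)
  · obtain ⟨l₀, hl₀, hh⟩ := hsat C hC (fun x => e.symm (σ x))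
    have hf := hflat C hC l₀ hl₀
    refine ⟨Literal.substDC σ (Literal.lift l₀), ?_, ?_⟩
    · rw [mem_prune_iff]
      refine ⟨mem_toDC_iff.mpr ⟨_, hl₀, rfl⟩, ?_⟩
      cases l₀ with
      | pos p ts => rintro ⟨d₁, d₂, hd, heq⟩; cases heq
      | neg p ts => rintro ⟨d₁, d₂, hd, heq⟩; cases heq
      | eq t s =>
          rcases hf with ⟨a, b, rfl, rfl⟩ | ⟨g, ts', y, rfl, hv, rfl⟩
          · have hab : σ a = σ b := e.symm.injective hh
            exact fun _ => hnt ⟨σ a, mem_toDC_iff.mpr ⟨_, hl₀,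
              by show Literal.eq (dcTerm (σ a)) (dcTerm (σ b)) = _; rw [hab]⟩⟩
          · choose x hx using hv
            rintro ⟨d₁, d₂, hd, heq⟩
            rw [show Literal.substDC σ (Literal.lift (Literal.eq (Term.app g ts') (Term.var y)))
                = Literal.eq (pTerm g (fun i => σ (x i))) (dcTerm (σ y)) from by
              show Literal.eq (((Term.app g ts').lift).substDC σ) _ = _
              rw [substDC_lift_app hx]; rfl] at heq
            injection heq with h1 h2
            exact pTerm_ne_dcTerm h1
      | ne t s =>
          obtain ⟨g, ts', y, rfl, hv, rfl⟩ := hf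
          rintro ⟨d₁, d₂, hd, heq⟩; cases heq
    · cases l₀ with
      | pos p ts =>
          choose x hx using hf
          refine ⟨fun i => σ (x i), funext fun i => by exact congrArg (fun t : Term L V => Term.substDC σ (Term.lift (n := n) t)) (hx i), ?_⟩
          simp only [Literal.holdsUnder] at hh
          have harg : (fun i => (ts i).eval S (fun z => e.symm (σ z)))
              = fun i => e.symm (σ (x i)) := funext fun i => by rw [hx i]; rfl
          rwa [harg] at hh
      | neg p ts =>
          choose x hx using hf
          refine ⟨fun i => σ (x i), funext fun i => by exact congrArg (fun t : Term L V => Term.substDC σ (Term.lift (n := n) t)) (hx i), ?_⟩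
          simp only [Literal.holdsUnder] at hh
          have harg : (fun i => (ts i).eval S (fun z => e.symm (σ z)))
              = fun i => e.symm (σ (x i)) := funext fun i => by rw [hx i]; rfl
          rwa [harg] at hh
      | eq t s =>
          rcases hf with ⟨a, b, rfl, rfl⟩ | ⟨g, ts', y, rfl, hv, rfl⟩
          · exact absurd ⟨σ a, mem_toDC_iff.mpr ⟨_, hl₀,
              by show Literal.eq (dcTerm (σ a)) (dcTerm (σ b)) = _
                 rw [e.symm.injective hh]⟩⟩ hnt
          · choose x hx using hv
            refine ⟨g, fun i => σ (x i), σ y, substDC_lift_app hx, rfl, ?_⟩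
            simp only [Literal.holdsUnder, Term.eval] at hh
            have harg : (fun i => (ts' i).eval S (fun z => e.symm (σ z)))
                = fun i => e.symm (σ (x i)) := funext fun i => by rw [hx i]; rfl
            rw [harg] at hh
            show e (S.funM g fun i => e.symm (σ (x i))) = σ y
            rw [hh, Equiv.apply_symm_apply]
      | ne t s =>
          obtain ⟨g, ts', y, rfl, hv, rfl⟩ := hf
          choose x hx using hv
          refine ⟨g, fun i => σ (x i), σ y, substDC_lift_app hx, rfl, ?_⟩
          intro hvE
          have hvE' : e (S.funM g fun i => e.symm (σ (x i))) = σ y := hvE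
          simp only [Literal.holdsUnder, Term.eval] at hh
          apply hh
          have harg : (fun i => (ts' i).eval S (fun z => e.symm (σ z)))
              = fun i => e.symm (σ (x i)) := funext fun i => by rw [hx i]; rfl
          rw [harg, ← hvE', Equiv.symm_apply_apply]
  · by_cases hk : e (S.funM f (fun i => e.symm (d i))) = d₁
    · refine ⟨Literal.ne (pTerm f d) (dcTerm d₂), by simp [funcClause], f, d, d₂, rfl, rfl, ?_⟩
      exact fun h => hne (hk.symm.trans h)
    · exact ⟨Literal.ne (pTerm f d) (dcTerm d₁), by simp [funcClause], f, d, d₁, rfl, rfl, hk⟩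
  · exact ⟨Literal.eq (pTerm f d) (dcTerm (e (S.funM f (fun i => e.symm (d i))))),
      by rw [totClause, List.mem_ofFn]; exact ⟨_, rfl⟩, f, d, _, rfl, rfl, rfl⟩


lemma backward (SS : Set (Clause L V)) (hn : 1 ≤ n)
    (hflat : ∀ C ∈ SS, ∀ l ∈ C, IsFlatLit l)
    (hex : ∃ (vP : (p : L.Pred) → (Fin (L.predAr p) → Fin n) → Prop)
      (vE : (f : L.Func) → (Fin (L.funAr f) → Fin n) → Fin n → Prop),
      ∀ D ∈ Sprime L V n SS, ∃ l ∈ D, LitPropTrue vP vE l) :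
    ∃ (M : Type) (S : Struc L M), Nat.card M = n ∧ ∀ C ∈ SS, Clause.holds S C := by
  obtain ⟨vP, vE, hsat⟩ := hex
  -- totality
  have htot : ∀ (f : L.Func) (d : Fin (L.funAr f) → Fin n), ∃ k, vE f d k := by
    intro f d
    obtain ⟨l, hl, hT⟩ := hsat (totClause f d) (Or.inr ⟨f, d, rfl⟩)
    rw [totClause, List.mem_ofFn] at hl
    obtain ⟨j, rfl⟩ := hl
    obtain ⟨f', d', e', h1, h2, hv⟩ := hT
    exact ⟨e', pTerm_inj h1 (fun g dd => vE g dd e') hv⟩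
  -- functionality
  have hfun : ∀ (f : L.Func) (d : Fin (L.funAr f) → Fin n) (k₁ k₂ : Fin n),
      vE f d k₁ → vE f d k₂ → k₁ = k₂ := by
    intro f d k₁ k₂ h1 h2
    by_contra hne
    obtain ⟨l, hl, hT⟩ := hsat (funcClause f d k₁ k₂) (Or.inl (Or.inr ⟨f, d, k₁, k₂, hne, rfl⟩))
    simp only [funcClause, List.mem_cons, List.mem_singleton, List.not_mem_nil, or_false] at hl
    rcases hl with rfl | rfl
    · obtain ⟨f', d', e', ha, hb, hv⟩ := hT
      obtain rfl : k₁ = e' := dcTerm_inj hb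
      exact pTerm_inj ha (fun g dd => ¬ vE g dd k₁) hv h1
    · obtain ⟨f', d', e', ha, hb, hv⟩ := hT
      obtain rfl : k₂ = e' := dcTerm_inj hb
      exact pTerm_inj ha (fun g dd => ¬ vE g dd k₂) hv h2
  refine ⟨Fin n, ⟨fun f d => (htot f d).choose, vP⟩, by simp, ?_⟩
  set S : Struc L (Fin n) := ⟨fun f d => (htot f d).choose, vP⟩ with hS
  have hchoice : ∀ (f : L.Func) (d : Fin (L.funAr f) → Fin n), vE f d (S.funM f d) :=
    fun f d => (htot f d).choose_spec
  have hval : ∀ (f : L.Func) (d : Fin (L.funAr f) → Fin n) (k : Fin n),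
      vE f d k → S.funM f d = k := fun f d k h => hfun f d _ k (hchoice f d) h
  intro C hC v
  by_cases hT : containsTaut (Clause.toDC v C)
  · obtain ⟨d, hd⟩ := hT
    obtain ⟨l₀, hl₀, heq⟩ := mem_toDC_iff.mp hd
    have hf := hflat C hC l₀ hl₀
    cases l₀ with
    | pos p ts => cases heq
    | neg p ts => cases heq
    | ne t s => cases heq
    | eq t s =>
        rcases hf with ⟨a, b, rfl, rfl⟩ | ⟨g, ts', y, rfl, hv, rfl⟩
        · injection heq with h1 h2
          refine ⟨_, hl₀, ?_⟩
          show v a = v b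
          rw [dcTerm_inj h1, dcTerm_inj h2]
        · injection heq with h1 h2
          have : (Term.app g ts').lift.substDC v = dcTerm d := h1
          choose x hx using hv
          rw [substDC_lift_app hx] at this
          exact absurd this pTerm_ne_dcTerm
  · obtain ⟨l', hl', hTrue⟩ := hsat (pruneClause (Clause.toDC v C))
      (Or.inl (Or.inl ⟨C, hC, v, hT, rfl⟩))
    obtain ⟨hmem, -⟩ := mem_prune_iff.mp hl'
    obtain ⟨l₀, hl₀, rfl⟩ := mem_toDC_iff.mp hmem
    have hf := hflat C hC l₀ hl₀
    refine ⟨l₀, hl₀, ?_⟩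
    cases l₀ with
    | pos p ts =>
        choose x hx using hf
        obtain ⟨d, hd, hvp⟩ := hTrue
        have hdx : ∀ i, d i = v (x i) := by
          intro i
          have := congrFun hd i
          simp only [hx] at this
          exact (dcTerm_inj this).symm
        show S.predM p fun i => (ts i).eval S v
        have : (fun i => (ts i).eval S v) = d := funext fun i => by
          rw [hx i, hdx i]; rfl
        rw [this]
        exact hvp
    | neg p ts =>
        choose x hx using hf
        obtain ⟨d, hd, hvp⟩ := hTrue
        have hdx : ∀ i, d i = v (x i) := by
          intro i
          have := congrFun hd i
          simp only [hx] at this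
          exact (dcTerm_inj this).symm
        show ¬ S.predM p fun i => (ts i).eval S v
        have : (fun i => (ts i).eval S v) = d := funext fun i => by
          rw [hx i, hdx i]; rfl
        rw [this]
        exact hvp
    | eq t s =>
        rcases hf with ⟨a, b, rfl, rfl⟩ | ⟨g, ts', y, rfl, hv, rfl⟩
        · obtain ⟨f', d', e', h1, h2, hvE⟩ := hTrue
          exact absurd h1.symm pTerm_ne_dcTerm
        · choose x hx using hv
          obtain ⟨f', d', e', h1, h2, hvE⟩ := hTrue
          have h1' : pTerm g (fun i => v (x i)) = pTerm f' d' := by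
            rw [← substDC_lift_app (σ := v) hx]; exact h1
          obtain rfl : v y = e' := dcTerm_inj h2
          have hvv : vE g (fun i => v (x i)) (v y) :=
            pTerm_inj h1' (fun g dd => vE g dd (v y)) hvE
          show (Term.app g ts').eval S v = (Term.var y).eval S v
          show S.funM g (fun i => (ts' i).eval S v) = v y
          have : (fun i => (ts' i).eval S v) = fun i => v (x i) := funext fun i => by
            rw [hx i]; rfl
          rw [this]
          exact hval _ _ _ hvv
    | ne t s =>
        obtain ⟨g, ts', y, rfl, hv, rfl⟩ := hf
        choose x hx using hv
        obtain ⟨f', d', e', h1, h2, hvE⟩ := hTrue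
        have h1' : pTerm g (fun i => v (x i)) = pTerm f' d' := by
          rw [← substDC_lift_app (σ := v) hx]; exact h1
        obtain rfl : v y = e' := dcTerm_inj h2
        have hvv : ¬ vE g (fun i => v (x i)) (v y) :=
          pTerm_inj h1' (fun g dd => ¬ vE g dd (v y)) hvE
        show S.funM g (fun i => (ts' i).eval S v) ≠ v y
        have : (fun i => (ts' i).eval S v) = fun i => v (x i) := funext fun i => by
          rw [hx i]; rfl
        rw [this]
        intro hcon
        exact hvv (hcon ▸ hchoice g (fun i => v (x i)))

end Main

/-- Let `S` be a set of flat clauses and `S'` the clause set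
obtained from the set `S*` of all `DC`-instances of clauses of `S` by removing
equalities between domain constants (deleting tautological clauses and pruning
literals between distinct domain constants) and adding all functionality and
totality definitions.  Then (i) every literal occurring in `S'` is principal,
and (ii) `S` is `n`-satisfiable iff `S'` is propositionally satisfiable
(viewing the principal atoms as propositional variables). -/
theorem flat_clauses_sat_encoding
    (L : Lang) (V : Type) (n : ℕ) (hn : 1 ≤ n) (SS : Set (Clause L V))
    (hflat : ∀ C ∈ SS, ∀ l ∈ C, IsFlatLit l) :
    (∀ D ∈ Sprime L V n SS, ∀ l ∈ D, IsPrincipalLit l) ∧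
    ((∃ (M : Type) (S : Struc L M), Nat.card M = n ∧ ∀ C ∈ SS, Clause.holds S C) ↔
      (∃ (vP : (p : L.Pred) → (Fin (L.predAr p) → Fin n) → Prop)
         (vE : (f : L.Func) → (Fin (L.funAr f) → Fin n) → Fin n → Prop),
        ∀ D ∈ Sprime L V n SS, ∃ l ∈ D, LitPropTrue vP vE l)) := by
  exact ⟨part_one SS hflat,
    fun h => forward SS hn hflat h,
    fun h => backward SS hn hflat h⟩

end FMF
end

section
/- A set S of L-clauses has a model whose universe has cardinality n if and only if S has a DC-model. -/
namespace FMF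

/-- Transport an `L`-structure on `M` along `e : M ≃ Fin n` to an
`L ∪ DC`-structure on `Fin n`. -/
def pushStruc {L : Lang} {M : Type} {n : ℕ} (S : Struc L M) (e : M ≃ Fin n) :
    Struc (L.withConsts n) (Fin n) where
  funM := fun f => match f with
    | Sum.inl f => fun args => e (S.funM f (fun i => e.symm (args i)))
    | Sum.inr i => fun _ => i
  predM p args := S.predM p (fun i => e.symm (args i))

theorem pushTerm_eval {L : Lang} {M V : Type} {n : ℕ} (S : Struc L M) (e : M ≃ Fin n)
    (v : V → Fin n) (t : Term L V) :
    Term.eval (pushStruc S e).reduct v t = e (Term.eval S (fun x => e.symm (v x)) t) := by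
  induction t with
  | var x => simp [Term.eval]
  | app f ts ih =>
      show e (S.funM f (fun i => e.symm (Term.eval (pushStruc S e).reduct v (ts i)))) = _
      simp only [Term.eval]
      congr 2
      funext i
      rw [ih i, Equiv.symm_apply_apply]

theorem pushLit_holds {L : Lang} {M V : Type} {n : ℕ} (S : Struc L M) (e : M ≃ Fin n)
    (v : V → Fin n) (l : Literal L V) :
    Literal.holdsUnder (pushStruc S e).reduct v l ↔
      Literal.holdsUnder S (fun x => e.symm (v x)) l := by
  cases l with
  | pos p ts =>
      show S.predM p (fun i => e.symm (Term.eval (pushStruc S e).reduct v (ts i))) ↔ _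
      simp only [pushTerm_eval, Equiv.symm_apply_apply]
      rfl
  | neg p ts =>
      show ¬ S.predM p (fun i => e.symm (Term.eval (pushStruc S e).reduct v (ts i))) ↔ _
      simp only [pushTerm_eval, Equiv.symm_apply_apply]
      rfl
  | eq t s =>
      simp only [Literal.holdsUnder, pushTerm_eval]
      exact e.apply_eq_iff_eq
  | ne t s =>
      simp only [Literal.holdsUnder, pushTerm_eval, ne_eq]
      rw [e.apply_eq_iff_eq]

/-- A set `S` of `L`-clauses has a model whose universe has
cardinality `n` if and only if `S` has a `DC`-model. -/
theorem n_satisfiable_iff_has_dc_model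
    (L : Lang) (V : Type) (n : ℕ) (hn : 1 ≤ n) (SS : Set (Clause L V)) :
    (∃ (M : Type) (S : Struc L M), Nat.card M = n ∧ ∀ C ∈ SS, Clause.holds S C) ↔
      (∃ I : DCInterp L n, ∀ C ∈ SS, Clause.holds I.S.reduct C) := by
  constructor
  · rintro ⟨M, S, hcard, hS⟩
    have hne : Nat.card M ≠ 0 := by omega
    have e : M ≃ Fin n := by
      have e' := Nat.equivFinOfCardPos hne
      rwa [hcard] at e'
    refine ⟨⟨pushStruc S e, fun i eargs => rfl⟩, ?_⟩
    intro C hC v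
    obtain ⟨l, hl, hhold⟩ := hS C hC (fun x => e.symm (v x))
    exact ⟨l, hl, (pushLit_holds S e v l).mpr hhold⟩
  · rintro ⟨I, hI⟩
    refine ⟨Fin n, I.S.reduct, by simp, hI⟩

end FMF
end

section
/- Let S be a set of L-clauses and let S* denote the set of all DC-instances of the clauses in S. Then S has a model whose universe has cardinality n if and only if S* has a DC-model. -/
namespace FMF

/-- Evaluation of a ground DC-instance of a lifted term in a DC-interpretation
agrees with evaluation of the original term in the reduct under `σ`. -/
lemma eval_substDC_lift {L : Lang} {V : Type} {n : ℕ} (I : DCInterp L n)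
    (σ : V → Fin n) (e : Empty → Fin n) (t : Term L V) :
    Term.eval I.S e ((Term.lift t).substDC σ) = Term.eval I.S.reduct σ t := by
  induction t with
  | var x => simpa [Term.lift, Term.substDC, dcTerm, Term.eval] using I.dc_self (σ x) _
  | app f ts ih =>
      simp only [Term.lift, Term.substDC, Term.eval, Struc.reduct]
      congr 1; funext i; exact ih i

lemma reduct_predM {L : Lang} {n : ℕ} {M : Type} (S : Struc (L.withConsts n) M)
    (p : L.Pred) (a : Fin (L.predAr p) → M) : S.reduct.predM p a = S.predM p a := rfl

lemma holdsUnder_substDC_lift {L : Lang} {V : Type} {n : ℕ} (I : DCInterp L n)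
    (σ : V → Fin n) (e : Empty → Fin n) (l : Literal L V) :
    Literal.holdsUnder I.S e ((Literal.lift l).substDC σ) ↔
      Literal.holdsUnder I.S.reduct σ l := by
  cases l <;>
    simp only [Literal.lift, Literal.substDC, Literal.holdsUnder, eval_substDC_lift,
      reduct_predM] <;> exact Iff.rfl

lemma trueUnder_toDC {L : Lang} {V : Type} {n : ℕ} (I : DCInterp L n)
    (σ : V → Fin n) (e : Empty → Fin n) (C : Clause L V) :
    Clause.trueUnder I.S e (Clause.toDC σ C) ↔ Clause.trueUnder I.S.reduct σ C := by
  unfold Clause.trueUnder Clause.toDC Clause.substDC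
  simp only [List.map_map, List.mem_map, Function.comp]
  constructor
  · rintro ⟨l', ⟨l, hl, rfl⟩, h⟩
    exact ⟨l, hl, (holdsUnder_substDC_lift I σ e l).1 h⟩
  · rintro ⟨l, hl, h⟩
    exact ⟨_, ⟨l, hl, rfl⟩, (holdsUnder_substDC_lift I σ e l).2 h⟩

/-- Push a structure along an equivalence of universes. -/
def Struc.push {L : Lang} {M N : Type} (S : Struc L M) (φ : M ≃ N) : Struc L N where
  funM f a := φ (S.funM f (fun i => φ.symm (a i)))
  predM p a := S.predM p (fun i => φ.symm (a i))

lemma push_funM {L : Lang} {M N : Type} (S : Struc L M) (φ : M ≃ N) (f : L.Func)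
    (a : Fin (L.funAr f) → N) :
    (S.push φ).funM f a = φ (S.funM f (fun i => φ.symm (a i))) := rfl

lemma push_predM {L : Lang} {M N : Type} (S : Struc L M) (φ : M ≃ N) (p : L.Pred)
    (a : Fin (L.predAr p) → N) :
    (S.push φ).predM p a = S.predM p (fun i => φ.symm (a i)) := rfl

lemma eval_push {L : Lang} {V M N : Type} (S : Struc L M) (φ : M ≃ N)
    (v : V → N) (t : Term L V) :
    Term.eval (S.push φ) v t = φ (Term.eval S (fun x => φ.symm (v x)) t) := by
  induction t with
  | var x => simp [Term.eval]
  | app f ts ih =>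
      rw [Term.eval, Term.eval, push_funM]
      have h : (fun i => φ.symm (Term.eval (S.push φ) v (ts i))) =
          fun i => Term.eval S (fun x => φ.symm (v x)) (ts i) := by
        funext i; rw [ih i, Equiv.symm_apply_apply]
      rw [h]

lemma holdsUnder_push {L : Lang} {V M N : Type} (S : Struc L M) (φ : M ≃ N)
    (v : V → N) (l : Literal L V) :
    Literal.holdsUnder (S.push φ) v l ↔
      Literal.holdsUnder S (fun x => φ.symm (v x)) l := by
  cases l <;>
    simp [Literal.holdsUnder, eval_push, push_predM, φ.symm_apply_apply,
      φ.apply_eq_iff_eq]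

lemma trueUnder_push {L : Lang} {V M N : Type} (S : Struc L M) (φ : M ≃ N)
    (v : V → N) (C : Clause L V) :
    Clause.trueUnder (S.push φ) v C ↔
      Clause.trueUnder S (fun x => φ.symm (v x)) C := by
  unfold Clause.trueUnder
  exact exists_congr fun l => and_congr_right fun _ => holdsUnder_push S φ v l

/-- The DC-interpretation obtained from an `L`-structure on `M` via an
equivalence `M ≃ Fin n`. -/
def transfer {L : Lang} {M : Type} {n : ℕ} (S : Struc L M) (φ : M ≃ Fin n) :
    DCInterp L n where
  S := { funM := fun f => match f with
           | Sum.inl f => fun a => φ (S.funM f (fun i => φ.symm (a i)))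
           | Sum.inr i => fun _ => i
         predM := fun p a => S.predM p (fun i => φ.symm (a i)) }
  dc_self := fun _ _ => rfl

lemma transfer_reduct {L : Lang} {M : Type} {n : ℕ} (S : Struc L M)
    (φ : M ≃ Fin n) : (transfer S φ).S.reduct = S.push φ := rfl

/-- Let `S` be a set of `L`-clauses and `S*` the set of all
`DC`-instances of the clauses in `S`.  Then `S` has a model whose universe has
cardinality `n` if and only if `S*` has a `DC`-model. -/
theorem n_satisfiable_iff_instances_have_dc_model
    (L : Lang) (V : Type) (n : ℕ) (hn : 1 ≤ n) (SS : Set (Clause L V)) :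
    (∃ (M : Type) (S : Struc L M), Nat.card M = n ∧ ∀ C ∈ SS, Clause.holds S C) ↔
      (∃ I : DCInterp L n,
        ∀ D ∈ {D : Clause (L.withConsts n) Empty |
                ∃ C ∈ SS, ∃ σ : V → Fin n, D = Clause.toDC σ C},
          Clause.holds I.S D) := by
  constructor
  · rintro ⟨M, S, hcard, hS⟩
    have hfin : Finite M := Nat.finite_of_card_ne_zero (by omega)
    obtain ⟨φ⟩ : Nonempty (M ≃ Fin n) := by
      have := Finite.equivFinOfCardEq hcard; exact ⟨this⟩
    refine ⟨transfer S φ, ?_⟩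
    rintro D ⟨C, hC, σ, rfl⟩ e
    rw [trueUnder_toDC, transfer_reduct, trueUnder_push]
    exact hS C hC _
  · rintro ⟨I, hI⟩
    refine ⟨Fin n, I.S.reduct, by simp, fun C hC σ => ?_⟩
    have := hI (Clause.toDC σ C) ⟨C, hC, σ, rfl⟩ Empty.elim
    rwa [trueUnder_toDC] at this

end FMF
end

section
/- Let S be a set of L-clauses and let a_1,…,a_l be constant symbols of L, arbitrarily ordered. If S has a DC-model, then S has a DC-model M satisfying the symmetry-breaking constraints: identifying the universe DC with {1,…,n}, the interpretation of a_1 in M is 1 (i.e., c_1), and for every 1 < i ≤ l the interpretation of a_i in M is at most 1 + max_{j < i} (interpretation of a_j in M); consequently the interpretation of a_i is among the first min(i, n) domain constants. -/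
namespace FMF

section AuxPerm

variable {L : Lang} {V : Type} {n : ℕ}

/-- Transport a DC-interpretation along a permutation of the universe. -/
def permDC (I : DCInterp L n) (π : Equiv.Perm (Fin n)) : DCInterp L n where
  S :=
    { funM := fun f => match f with
        | Sum.inl f => fun e => π (I.S.funM (Sum.inl f) (fun i => π.symm (e i)))
        | Sum.inr i => fun _ => i
      predM := fun p e => I.S.predM p (fun i => π.symm (e i)) }
  dc_self := fun _ _ => rfl

theorem eval_permDC (I : DCInterp L n) (π : Equiv.Perm (Fin n)) (v : V → Fin n) :
    ∀ t : Term L V, Term.eval (permDC I π).S.reduct v t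
      = π (Term.eval I.S.reduct (fun x => π.symm (v x)) t)
  | .var x => (π.apply_symm_apply (v x)).symm
  | .app f ts => by
      show π (I.S.funM (Sum.inl f) (fun i => π.symm (Term.eval (permDC I π).S.reduct v (ts i))))
        = π (I.S.funM (Sum.inl f) _)
      exact congrArg (fun g => π (I.S.funM (Sum.inl f) g))
        (funext fun i => by rw [eval_permDC I π v (ts i), Equiv.symm_apply_apply])

theorem holds_permDC (I : DCInterp L n) (π : Equiv.Perm (Fin n)) (v : V → Fin n)
    (lit : Literal L V) :
    Literal.holdsUnder (permDC I π).S.reduct v lit ↔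
      Literal.holdsUnder I.S.reduct (fun x => π.symm (v x)) lit := by
  cases lit with
  | pos p ts =>
      show I.S.predM p (fun i => π.symm _) ↔ I.S.predM p _
      simp only [eval_permDC, Equiv.symm_apply_apply]
      exact Iff.rfl
  | neg p ts =>
      show ¬ I.S.predM p (fun i => π.symm _) ↔ ¬ I.S.predM p _
      simp only [eval_permDC, Equiv.symm_apply_apply]
      exact Iff.rfl
  | eq t s =>
      show _ = _ ↔ _ = _
      simp only [eval_permDC, EmbeddingLike.apply_eq_iff_eq]
  | ne t s =>
      show _ ≠ _ ↔ _ ≠ _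
      simp only [eval_permDC, ne_eq, EmbeddingLike.apply_eq_iff_eq]

theorem models_permDC (I : DCInterp L n) (π : Equiv.Perm (Fin n))
    (SS : Set (Clause L V)) (h : ∀ C ∈ SS, Clause.holds I.S.reduct C) :
    ∀ C ∈ SS, Clause.holds (permDC I π).S.reduct C := by
  intro C hC w
  obtain ⟨lit, hmem, hlit⟩ := h C hC (fun x => π.symm (w x))
  exact ⟨lit, hmem, (holds_permDC I π w lit).mpr hlit⟩

end AuxPerm

section AuxIdx

open scoped Classical

variable {n l : ℕ} (v : Fin l → Fin n)

/-- Image of the first `m+1` values. -/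
def pimg (m : ℕ) : Finset (Fin n) :=
  (Finset.univ.filter (fun k : Fin l => k.val ≤ m)).image v

theorem pimg_mono {m m' : ℕ} (h : m ≤ m') : pimg v m ⊆ pimg v m' := by
  apply Finset.image_subset_image
  intro k hk
  simp only [Finset.mem_filter, Finset.mem_univ, true_and] at hk ⊢
  omega

theorem mem_pimg (j : Fin l) {m : ℕ} (h : j.val ≤ m) : v j ∈ pimg v m :=
  Finset.mem_image.2 ⟨j, by simp [h], rfl⟩

theorem card_pimg_le (m : ℕ) : (pimg v m).card ≤ m + 1 := by
  refine Finset.card_image_le.trans ?_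
  have : (Finset.univ.filter (fun k : Fin l => k.val ≤ m)).card
      ≤ (Finset.range (m + 1)).card := by
    apply Finset.card_le_card_of_injOn (fun k => k.val)
    · intro k hk
      simp only [Finset.coe_filter, Finset.mem_coe, Finset.mem_filter, Set.mem_setOf_eq] at hk
      simp [Nat.lt_succ_of_le hk.2]
    · intro x _ y _ hxy
      exact Fin.ext hxy
  simpa using this

/-- Existence witness for `idx`. -/
theorem idx_ex (j : Fin l) : ∃ k, ∃ hk : k < l, v ⟨k, hk⟩ = v j := ⟨j.1, j.2, rfl⟩

/-- First-occurrence rank of a value. -/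
noncomputable def idx (x : Fin n) : ℕ :=
  if hx : ∃ k, ∃ hk : k < l, v ⟨k, hk⟩ = x then (pimg v (Nat.find hx)).card - 1 else 0

theorem idx_apply (j : Fin l) :
    idx v (v j) = (pimg v (Nat.find (idx_ex v j))).card - 1 := dif_pos _

theorem find_le (j : Fin l) : Nat.find (idx_ex v j) ≤ j.val :=
  Nat.find_le ⟨j.2, by simp⟩

theorem mem_pimg_find (j : Fin l) : v j ∈ pimg v (Nat.find (idx_ex v j)) := by
  obtain ⟨hfl, hfv⟩ := Nat.find_spec (idx_ex v j)
  exact Finset.mem_image.2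
    ⟨⟨Nat.find (idx_ex v j), hfl⟩, Finset.mem_filter.2 ⟨Finset.mem_univ _, le_rfl⟩, hfv⟩

theorem card_find_pos (j : Fin l) : 1 ≤ (pimg v (Nat.find (idx_ex v j))).card :=
  Finset.card_pos.2 ⟨v j, mem_pimg_find v j⟩

theorem idx_succ (j : Fin l) :
    idx v (v j) + 1 = (pimg v (Nat.find (idx_ex v j))).card := by
  rw [idx_apply]
  exact Nat.succ_pred_eq_of_pos (card_find_pos v j)

theorem idx_le (j : Fin l) : idx v (v j) ≤ j.val := by
  rw [idx_apply]
  have h1 := card_pimg_le v (Nat.find (idx_ex v j))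
  have h2 := find_le v j
  omega

theorem idx_lt (hn : 1 ≤ n) (x : Fin n) : idx v x < n := by
  unfold idx
  split
  · rename_i hx
    have h1 : (pimg v (Nat.find hx)).card ≤ n := by
      simpa using Finset.card_le_univ (pimg v (Nat.find hx))
    have h2 : 0 < (pimg v (Nat.find hx)).card := by
      apply Finset.card_pos.2
      obtain ⟨hfl, hfv⟩ := Nat.find_spec hx
      exact ⟨x, Finset.mem_image.2
        ⟨⟨Nat.find hx, hfl⟩, Finset.mem_filter.2 ⟨Finset.mem_univ _, le_rfl⟩, hfv⟩⟩
    omega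
  · exact hn

theorem idx_inj_aux (j k : Fin l)
    (hle : Nat.find (idx_ex v j) ≤ Nat.find (idx_ex v k))
    (h : idx v (v j) = idx v (v k)) : v j = v k := by
  have hcard : (pimg v (Nat.find (idx_ex v j))).card
      = (pimg v (Nat.find (idx_ex v k))).card := by
    rw [← idx_succ, ← idx_succ, h]
  have heq : pimg v (Nat.find (idx_ex v j)) = pimg v (Nat.find (idx_ex v k)) :=
    Finset.eq_of_subset_of_card_le (pimg_mono v hle) (le_of_eq hcard.symm)
  have hmem : v k ∈ pimg v (Nat.find (idx_ex v j)) := heq ▸ mem_pimg_find v k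
  obtain ⟨k', hk', hvk'⟩ := Finset.mem_image.1 hmem
  simp only [Finset.mem_filter, Finset.mem_univ, true_and] at hk'
  have hfk : Nat.find (idx_ex v k) ≤ k'.val :=
    Nat.find_le ⟨k'.2, by simpa using hvk'⟩
  have hfe : Nat.find (idx_ex v j) = Nat.find (idx_ex v k) := le_antisymm hle (hfk.trans hk')
  obtain ⟨hjl, hjv⟩ := Nat.find_spec (idx_ex v j)
  obtain ⟨hkl, hkv⟩ := Nat.find_spec (idx_ex v k)
  rw [← hjv, ← hkv]
  congr 1
  exact Fin.ext hfe

theorem idx_inj (j k : Fin l) (h : idx v (v j) = idx v (v k)) : v j = v k := by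
  rcases le_total (Nat.find (idx_ex v j)) (Nat.find (idx_ex v k)) with hle | hle
  · exact idx_inj_aux v j k hle h
  · exact (idx_inj_aux v k j hle h.symm).symm

theorem sup_attain (hl : 0 < l) :
    ∀ m : ℕ, ∃ k : Fin l, k.val ≤ m ∧ idx v (v k) + 1 = (pimg v m).card := by
  intro m
  induction m with
  | zero =>
      refine ⟨⟨0, hl⟩, le_rfl, ?_⟩
      have h1 : idx v (v ⟨0, hl⟩) ≤ 0 := idx_le v ⟨0, hl⟩
      have h2 : (pimg v 0).card ≤ 1 := card_pimg_le v 0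
      have h3 : 1 ≤ (pimg v 0).card :=
        Finset.card_pos.2 ⟨v ⟨0, hl⟩, mem_pimg v ⟨0, hl⟩ le_rfl⟩
      omega
  | succ m ih =>
      by_cases hsub : pimg v (m + 1) ⊆ pimg v m
      · have heq : pimg v (m + 1) = pimg v m :=
          subset_antisymm hsub (pimg_mono v (Nat.le_succ m))
        obtain ⟨k, hk, hc⟩ := ih
        exact ⟨k, hk.trans (Nat.le_succ m), heq ▸ hc⟩
      · obtain ⟨x, hx1, hx2⟩ := Finset.not_subset.1 hsub
        obtain ⟨k1, hk1, hvk1⟩ := Finset.mem_image.1 hx1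
        simp only [Finset.mem_filter, Finset.mem_univ, true_and] at hk1
        have hk1m : ¬ k1.val ≤ m := fun h => hx2 (hvk1 ▸ mem_pimg v k1 h)
        have hk1v : k1.val = m + 1 := by omega
        have hfind : Nat.find (idx_ex v k1) = m + 1 := by
          refine le_antisymm (hk1v ▸ find_le v k1) ?_
          by_contra hlt
          push_neg at hlt
          obtain ⟨hfl, hfv⟩ := Nat.find_spec (idx_ex v k1)
          have hfm : Nat.find (idx_ex v k1) ≤ m := by omega
          have hmm : v k1 ∈ pimg v m :=
            hfv ▸ mem_pimg v ⟨_, hfl⟩ hfm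
          exact hx2 (hvk1 ▸ hmm)
        refine ⟨k1, le_of_eq hk1v, ?_⟩
        rw [idx_succ v k1, hfind]

theorem idx_le_sup (j : Fin l) (hj : 0 < j.val) :
    idx v (v j) ≤ 1 + (Finset.univ.filter (fun k => k < j)).sup (fun k => idx v (v k)) := by
  obtain ⟨hfl, hfv⟩ := Nat.find_spec (idx_ex v j)
  rcases lt_or_eq_of_le (find_le v j) with hlt | heq
  · -- earlier occurrence
    have hk' : (⟨Nat.find (idx_ex v j), hfl⟩ : Fin l) < j := hlt
    have hmemf : (⟨Nat.find (idx_ex v j), hfl⟩ : Fin l) ∈ Finset.univ.filter (fun k => k < j) :=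
      Finset.mem_filter.2 ⟨Finset.mem_univ _, hk'⟩
    have hle2 : idx v (v ⟨Nat.find (idx_ex v j), hfl⟩)
        ≤ (Finset.univ.filter (fun k => k < j)).sup (fun k => idx v (v k)) :=
      Finset.le_sup (f := fun k => idx v (v k)) hmemf
    have hrw : idx v (v j) = idx v (v ⟨Nat.find (idx_ex v j), hfl⟩) := by rw [hfv]
    omega
  · -- first occurrence at j
    obtain ⟨m, hm⟩ : ∃ m, j.val = m + 1 := ⟨j.val - 1, by omega⟩
    have hsubset : pimg v (m + 1) ⊆ insert (v j) (pimg v m) := by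
      intro x hx
      obtain ⟨k, hk, hvk⟩ := Finset.mem_image.1 hx
      simp only [Finset.mem_filter, Finset.mem_univ, true_and] at hk
      rcases Nat.lt_or_ge k.val (m + 1) with h1 | h1
      · exact Finset.mem_insert.2 (Or.inr (hvk ▸ mem_pimg v k (by omega)))
      · have hkeq : k = j := Fin.ext (by omega)
        exact Finset.mem_insert.2 (Or.inl (by rw [← hvk, hkeq]))
    have hcard : (pimg v (m + 1)).card ≤ (pimg v m).card + 1 :=
      le_trans (Finset.card_le_card hsubset) (Finset.card_insert_le _ _)
    obtain ⟨k, hk, hkc⟩ := sup_attain v (Fin.pos j) m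
    have hkj : k < j := by
      rw [Fin.lt_def]; omega
    have hsup : idx v (v k) ≤ (Finset.univ.filter (fun k => k < j)).sup
        (fun k => idx v (v k)) :=
      Finset.le_sup (f := fun k => idx v (v k))
        (Finset.mem_filter.2 ⟨Finset.mem_univ k, hkj⟩)
    have hjc := idx_succ v j
    rw [heq, hm] at hjc
    omega

end AuxIdx

/-- If `S` has a `DC`-model, then `S` has a `DC`-model
satisfying the symmetry-breaking constraints on the (0-indexed) interpretations
of the ordered constants `a_0, …, a_{l-1}`: `a_0` is interpreted by the first
domain constant, the interpretation of each `a_j` is at most one more than the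
maximum of the interpretations of the earlier constants, and consequently the
interpretation of `a_j` is among the first `min (j+1) n` domain constants. -/
theorem symmetry_breaking (L : Lang) (V : Type) (n : ℕ) (hn : 1 ≤ n)
    (SS : Set (Clause L V)) (l : ℕ) (a : Fin l → L.Func)
    (ha : ∀ j, L.funAr (a j) = 0)
    (hex : ∃ I : DCInterp L n, ∀ C ∈ SS, Clause.holds I.S.reduct C) :
    ∃ I : DCInterp L n,
      (∀ C ∈ SS, Clause.holds I.S.reduct C) ∧
      (let val : Fin l → Fin n := fun j =>
          I.S.funM (Sum.inl (a j)) (fun i => (Fin.cast (ha j) i).elim0)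
       (∀ j : Fin l, j.val = 0 → (val j).val = 0) ∧
       (∀ j : Fin l, 0 < j.val →
          (val j).val ≤
            1 + (Finset.univ.filter (fun k => k < j)).sup (fun k => (val k).val)) ∧
       (∀ j : Fin l, (val j).val < min (j.val + 1) n)) := by
  classical
  obtain ⟨I0, hI0⟩ := hex
  set v : Fin l → Fin n :=
    fun j => I0.S.funM (Sum.inl (a j)) (fun i => (Fin.cast (ha j) i).elim0) with hv
  set F : Fin n → Fin n := fun x => ⟨idx v x, idx_lt v hn x⟩ with hF
  let e : {x // x ∈ Set.range v} ≃ {x // x ∈ F '' Set.range v} :=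
    Equiv.ofBijective (fun x => ⟨F x.1, ⟨x.1, x.2, rfl⟩⟩)
      ⟨by
        rintro ⟨x, jx, hjx⟩ ⟨y, jy, hjy⟩ hxy
        simp only [Subtype.mk.injEq] at hxy ⊢
        have h : idx v x = idx v y := by simpa [hF, Fin.ext_iff] using hxy
        subst hjx hjy
        exact Subtype.ext (idx_inj v jx jy h),
       by
        rintro ⟨y, x, hx, hxy⟩
        exact ⟨⟨x, hx⟩, Subtype.ext hxy⟩⟩
  let π : Equiv.Perm (Fin n) := e.extendSubtype
  have hπ : ∀ j : Fin l, π (v j) = F (v j) := by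
    intro j
    have hmem : v j ∈ Set.range v := ⟨j, rfl⟩
    rw [Equiv.extendSubtype_apply_of_mem e (v j) hmem]
    rfl
  have hval : ∀ j : Fin l,
      (permDC I0 π).S.funM (Sum.inl (a j)) (fun i => (Fin.cast (ha j) i).elim0)
        = π (v j) := by
    intro j
    show π (I0.S.funM (Sum.inl (a j)) _) = π (v j)
    exact congrArg (fun g => π (I0.S.funM (Sum.inl (a j)) g))
      (funext fun i => (Fin.cast (ha j) i).elim0)
  refine ⟨permDC I0 π, models_permDC I0 π SS hI0, ?_, ?_, ?_⟩
  · intro j hj0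
    beta_reduce
    rw [hval j, hπ j]
    show idx v (v j) = 0
    have := idx_le v j
    omega
  · intro j hj
    beta_reduce
    rw [hval j, hπ j]
    have hsup : ((Finset.univ.filter (fun k => k < j)).sup
          (fun k => ((permDC I0 π).S.funM (Sum.inl (a k))
            (fun i => (Fin.cast (ha k) i).elim0)).val))
        = (Finset.univ.filter (fun k => k < j)).sup (fun k => idx v (v k)) := by
      refine Finset.sup_congr rfl ?_
      intro k _
      rw [hval k, hπ k]
    rw [hsup]
    exact idx_le_sup v j hj
  · intro j
    beta_reduce
    rw [hval j, hπ j]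
    exact lt_min (Nat.lt_succ_of_le (idx_le v j)) (idx_lt v hn (v j))

end FMF
end

section
/- Let M be an L-structure and let φ(x, y) and ψ(y, z) be quantifier-free L-formulas. Then M satisfies ∀x ∀y ∀z (φ(x, y) ∨ ψ(y, z)) if and only if there is an expansion M' of M to the language L ∪ {s}, where s is a fresh unary predicate symbol, such that M' satisfies both ∀x ∀y (φ(x, y) ∨ s(y)) and ∀y ∀z (¬s(y) ∨ ψ(y, z)). Consequently, clause splitting preserves satisfiability. -/
open FirstOrder FirstOrder.Language

/-- The language consisting of a single unary predicate symbol `s`. -/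
def sLang : FirstOrder.Language where
  Functions := fun _ => Empty
  Relations := fun n => match n with
    | 1 => Unit
    | _ => Empty

/-- The unary predicate symbol `s` of `sLang`. -/
def sSym : sLang.Relations 1 := ()

/-- Let `M` be an `L`-structure and `φ(x, y)`, `ψ(y, z)`
quantifier-free `L`-formulas.  Then `M ⊨ ∀x ∀y ∀z (φ(x, y) ∨ ψ(y, z))` iff
there is an expansion `M'` of `M` to the language `L ∪ {s}` (`s` a fresh unary
predicate) satisfying both `∀x ∀y (φ(x, y) ∨ s(y))` and
`∀y ∀z (¬s(y) ∨ ψ(y, z))`.  Consequently, clause splitting preserves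
satisfiability. -/
theorem clause_splitting {L : FirstOrder.Language} (M : Type*)
    [inst : L.Structure M] (φ ψ : L.Formula (Fin 2))
    (hφ : (φ : L.BoundedFormula (Fin 2) 0).IsQF)
    (hψ : (ψ : L.BoundedFormula (Fin 2) 0).IsQF) :
    (∀ x y z : M, φ.Realize ![x, y] ∨ ψ.Realize ![y, z]) ↔
      ∃ S' : (L.sum sLang).Structure M,
        @LHom.IsExpansionOn L (L.sum sLang) LHom.sumInl M inst S' ∧
        (∀ x y : M,
          φ.Realize ![x, y] ∨ @Structure.RelMap (L.sum sLang) M S' 1 (Sum.inr sSym) ![y]) ∧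
        (∀ y z : M,
          ¬ @Structure.RelMap (L.sum sLang) M S' 1 (Sum.inr sSym) ![y] ∨ ψ.Realize ![y, z]) := by

  constructor
  · intro h
    letI S' : (L.sum sLang).Structure M :=
      { funMap := fun {n} f x => match f with
          | Sum.inl f => Structure.funMap f x
          | Sum.inr f => Empty.elim f,
        RelMap := fun {n} r x => match r with
          | Sum.inl r => Structure.RelMap r x
          | Sum.inr r => match n, r, x with
            | 1, _, x => ∃ a : M, ¬ φ.Realize ![a, x 0]
            | (_+2), r, _ => Empty.elim r
            | 0, r, _ => Empty.elim r }
    refine ⟨S', { map_onFunction := fun _ _ => rfl, map_onRelation := fun _ _ => by rfl }, ?_, ?_⟩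
    · intro x y
      by_cases hs : ∃ a : M, ¬ φ.Realize ![a, y]
      · exact Or.inr hs
      · push_neg at hs
        exact Or.inl (hs x)
    · intro y z
      by_cases hs : ∃ a : M, ¬ φ.Realize ![a, y]
      · obtain ⟨a, ha⟩ := hs
        exact Or.inr ((h a y z).resolve_left ha)
      · exact Or.inl hs
  · rintro ⟨S', hexp, h1, h2⟩ x y z
    rcases h1 x y with hφ' | hs
    · exact Or.inl hφ'
    · rcases h2 y z with hns | hψ'
      · exact absurd hs hns
      · exact Or.inr hψ'
end

section
/- Let S be a set of clauses in which no equality atom occurs positively, i.e., every equality literal occurring in a clause of S is a negated equality t ≠ s (predicate literals may occur with either polarity). If S has a model whose universe has finite cardinality n ≥ 1, then S has a model whose universe has cardinality n + 1 (and hence of every finite cardinality ≥ n). -/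
namespace FMF

/-- Let `S` be a set of clauses in which no equality atom
occurs positively.  If `S` has a model whose universe has finite cardinality
`n ≥ 1`, then `S` has a model whose universe has cardinality `n + 1`. -/
theorem monotone_of_no_positive_equality
    (L : Lang) (V : Type) (SS : Set (Clause L V))
    (hnopos : ∀ C ∈ SS, ∀ l ∈ C, ∀ t s : Term L V, l ≠ Literal.eq t s)
    (n : ℕ) (hn : 1 ≤ n)
    (h : ∃ (M : Type) (S : Struc L M), Nat.card M = n ∧ ∀ C ∈ SS, Clause.holds S C) :
    ∃ (M : Type) (S : Struc L M), Nat.card M = n + 1 ∧ ∀ C ∈ SS, Clause.holds S C := by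
  obtain ⟨M, S, hcard, hmod⟩ := h
  have hfin : Finite M := Nat.finite_of_card_ne_zero (by omega)
  have hne : Nonempty M := Nat.card_pos_iff.mp (by omega) |>.1
  obtain ⟨m0⟩ := hne
  classical
  let r : Option M → M := fun x => x.getD m0
  let S' : Struc L (Option M) :=
    { funM := fun f a => some (S.funM f (fun i => r (a i)))
      predM := fun p a => S.predM p (fun i => r (a i)) }
  have key : ∀ (t : Term L V) (v : V → Option M),
      r (t.eval S' v) = t.eval S (fun x => r (v x)) := by
    intro t
    induction t with
    | var x => intro v; rfl
    | app f ts ih =>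
      intro v
      show r (some _) = _
      simp only [Term.eval, r, Option.getD_some]
      congr 1
      funext i
      exact ih i v
  refine ⟨Option M, S', ?_, ?_⟩
  · have := Fintype.ofFinite M
    rw [Nat.card_eq_fintype_card, Fintype.card_option, ← hcard, Nat.card_eq_fintype_card]
  · intro C hC v
    obtain ⟨l, hl, hlh⟩ := hmod C hC (fun x => r (v x))
    refine ⟨l, hl, ?_⟩
    cases l with
    | pos p ts =>
      show S.predM p (fun i => r ((ts i).eval S' v))
      rw [show (fun i => r ((ts i).eval S' v)) = fun i => (ts i).eval S (fun x => r (v x))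
        from funext fun i => key (ts i) v]
      exact hlh
    | neg p ts =>
      show ¬ S.predM p (fun i => r ((ts i).eval S' v))
      rw [show (fun i => r ((ts i).eval S' v)) = fun i => (ts i).eval S (fun x => r (v x))
        from funext fun i => key (ts i) v]
      exact hlh
    | eq t s => exact absurd rfl (hnopos C hC _ hl t s)
    | ne t s =>
      intro hts
      exact hlh (by rw [← key t v, ← key s v, hts])


end FMF
end
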